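/- arXiv:2306.04160 — 3 statements merged into one kernel-verified Lean document; each statement's English description precedes it below -/
import Mathlib

section
/- Let Y_L ∈ ℝ^{n_L×r} be a row-stochastic matrix (each row sums to 1). With T as defined, the noisy label similarity matrix A*_L := (Y_L T)(Y_L T)^⊤ satisfies A*_L = α·Y_L Y_L^⊤ + β·1_{n_L} 1_{n_L}^⊤, where α = (1 - rγ/(r-1))² and β = (γ/(r-1))·(2 - rγ/(r-1)), and 1_{n_L} is the all-ones column vector. -/
open Matrix

/-- For a row-stochastic posterior matrix `Y_L` and the symmetric-noise
transition matrix `T`, the noisy label similarity matrix `(Y_L T)(Y_L T)ᵀ` equals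
`α • Y_L Y_Lᵀ + β • 1 1ᵀ`. -/
theorem noisy_similarity_graph (r nL : ℕ) (hr : 2 ≤ r) (hnL : 1 ≤ nL)
    (γ : ℝ) (hγ0 : 0 ≤ γ) (hγ1 : γ < 1)
    (T : Matrix (Fin r) (Fin r) ℝ)
    (hT : ∀ i j, T i j = if i = j then 1 - γ else γ / ((r : ℝ) - 1))
    (Y : Matrix (Fin nL) (Fin r) ℝ)
    (hY0 : ∀ i j, 0 ≤ Y i j)
    (hY1 : ∀ i, ∑ j, Y i j = 1) :
    (Y * T) * (Y * T)ᵀ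
      = ((1 - (r : ℝ) * γ / ((r : ℝ) - 1)) ^ 2) • (Y * Yᵀ)
        + ((γ / ((r : ℝ) - 1)) * (2 - (r : ℝ) * γ / ((r : ℝ) - 1)))
            • (Matrix.of fun _ _ => (1 : ℝ)) := by
  have hr1 : (1 : ℝ) ≤ (r : ℝ) - 1 := by
    have : (2 : ℝ) ≤ (r : ℝ) := by exact_mod_cast hr
    linarith
  have hrne : (r : ℝ) - 1 ≠ 0 := by linarith
  set c : ℝ := γ / ((r : ℝ) - 1) with hc
  set a : ℝ := 1 - (r : ℝ) * γ / ((r : ℝ) - 1) with ha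
  have key : ∀ (i : Fin nL) (k : Fin r), (Y * T) i k = a * Y i k + c := by
    intro i k
    rw [mul_apply]
    have : ∀ m, Y i m * T m k = (1 - γ - c) * (if m = k then Y i m else 0) + c * Y i m := by
      intro m
      rw [hT]
      by_cases h : m = k <;> simp [h] <;> ring
    rw [Finset.sum_congr rfl (fun m _ => this m), Finset.sum_add_distrib,
      ← Finset.mul_sum, ← Finset.mul_sum, Finset.sum_ite_eq' _ k, hY1]
    simp only [Finset.mem_univ, if_true, mul_one]
    have haeq : 1 - γ - c = a := by
      rw [ha, hc]; field_simp; ring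
    rw [haeq]
  ext i j
  have entry : ((Y * T) * (Y * T)ᵀ) i j = ∑ k, (a * Y i k + c) * (a * Y j k + c) := by
    rw [mul_apply]
    exact Finset.sum_congr rfl fun k _ => by rw [transpose_apply, key i k, key j k]
  rw [entry]
  simp only [Matrix.add_apply, Matrix.smul_apply, of_apply, smul_eq_mul, mul_one, mul_apply, transpose_apply]
  have expand : ∀ k : Fin r, (a * Y i k + c) * (a * Y j k + c)
      = a ^ 2 * (Y i k * Y j k) + (a * c) * Y i k + ((a * c) * Y j k + c ^ 2) := by
    intro k; ring
  rw [Finset.sum_congr rfl (fun k _ => expand k), Finset.sum_add_distrib,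
    Finset.sum_add_distrib, Finset.sum_add_distrib, ← Finset.mul_sum, ← Finset.mul_sum,
    ← Finset.mul_sum, hY1, hY1, Finset.sum_const, Finset.card_univ, Fintype.card_fin]
  have hrc : (r : ℝ) * c ^ 2 = c * (1 - a) := by
    rw [ha, hc]; field_simp; ring
  have : (r : ℕ) • c ^ 2 = (r : ℝ) * c ^ 2 := by simp
  rw [this, hrc]
  ring
end

section
/- For two real symmetric n×n matrices A and B with eigenvalues (in descending order) a_1 ≥ … ≥ a_n and b_1 ≥ … ≥ b_n respectively, the (k+1)-th largest eigenvalue λ_{k+1} of A + B satisfies max_{i+j = n+k+2, i,j ≥ 1} (a_i + b_j) ≤ λ_{k+1} ≤ min_{i+j = k+2, i,j ≥ 1} (a_i + b_j). -/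
open Matrix Finset
open scoped RealInnerProductSpace

section WeylHelpers

variable {n : ℕ}

/-- `M *ᵥ x` as an element of Euclidean space. -/
noncomputable def mulVecE (M : Matrix (Fin n) (Fin n) ℝ) (x : EuclideanSpace ℝ (Fin n)) :
    EuclideanSpace ℝ (Fin n) :=
  (WithLp.equiv 2 (Fin n → ℝ)).symm (M *ᵥ (WithLp.equiv 2 (Fin n → ℝ) x))

lemma inner_mulVecE (M : Matrix (Fin n) (Fin n) ℝ) (v x : EuclideanSpace ℝ (Fin n)) :
    ⟪v, mulVecE M x⟫ = (WithLp.equiv 2 (Fin n → ℝ) v) ⬝ᵥ (M *ᵥ (WithLp.equiv 2 (Fin n → ℝ) x)) := by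
  simp only [PiLp.inner_apply, RCLike.inner_apply, conj_trivial, mulVecE]
  rw [dotProduct]
  exact Finset.sum_congr rfl fun _ _ => mul_comm _ _

lemma inner_mulVecE_symm (M : Matrix (Fin n) (Fin n) ℝ) (hM : M.IsHermitian)
    (v x : EuclideanSpace ℝ (Fin n)) :
    ⟪v, mulVecE M x⟫ = ⟪mulVecE M v, x⟫ := by
  have hT : Mᵀ = M := by
    have := hM.eq; rwa [Matrix.conjTranspose_eq_transpose_of_trivial] at this
  rw [inner_mulVecE, real_inner_comm, inner_mulVecE, dotProduct_mulVec,
    ← Matrix.mulVec_transpose, hT, dotProduct_comm]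

lemma mulVecE_add (M N : Matrix (Fin n) (Fin n) ℝ) (x : EuclideanSpace ℝ (Fin n)) :
    mulVecE (M + N) x = mulVecE M x + mulVecE N x := by
  simp [mulVecE, Matrix.add_mulVec]

lemma quad_expand (M : Matrix (Fin n) (Fin n) ℝ) (hM : M.IsHermitian)
    (u : OrthonormalBasis (Fin n) ℝ (EuclideanSpace ℝ (Fin n))) (d : Fin n → ℝ)
    (hu : ∀ i, mulVecE M (u i) = d i • (u i)) (x : EuclideanSpace ℝ (Fin n)) :
    ⟪x, mulVecE M x⟫ = ∑ i, d i * ⟪u i, x⟫ ^ 2 := by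
  set y := mulVecE M x with hy
  have key : ∀ i, ⟪u i, y⟫ = d i * ⟪u i, x⟫ := by
    intro i
    rw [hy, inner_mulVecE_symm M hM, hu i, real_inner_smul_left]
  have h1 : ⟪x, y⟫ = ∑ i, (u.repr x i) * (u.repr y i) := by
    rw [← u.repr.inner_map_map x y, PiLp.inner_apply]
    simp [RCLike.inner_apply]
    exact Finset.sum_congr rfl fun _ _ => mul_comm _ _
  rw [h1]
  refine Finset.sum_congr rfl fun i _ => ?_
  rw [u.repr_apply_apply, u.repr_apply_apply, key i]
  ring

lemma norm_sq_expand (u : OrthonormalBasis (Fin n) ℝ (EuclideanSpace ℝ (Fin n)))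
    (x : EuclideanSpace ℝ (Fin n)) :
    ⟪x, x⟫ = ∑ i, ⟪u i, x⟫ ^ 2 := by
  rw [← u.repr.inner_map_map x x, PiLp.inner_apply]
  simp [RCLike.inner_apply, u.repr_apply_apply, sq]

lemma inner_eq_zero_of_span (u : OrthonormalBasis (Fin n) ℝ (EuclideanSpace ℝ (Fin n)))
    (s : Finset (Fin n)) (x : EuclideanSpace ℝ (Fin n))
    (hx : x ∈ Submodule.span ℝ (u '' ↑s)) (i : Fin n) (hi : i ∉ s) : ⟪u i, x⟫ = 0 := by
  induction hx using Submodule.span_induction with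
  | mem y hy =>
    obtain ⟨j, hj, rfl⟩ := hy
    exact u.orthonormal.2 (fun h => hi (h ▸ hj))
  | zero => simp
  | add y z _ _ hy hz => rw [inner_add_right, hy, hz, add_zero]
  | smul c y _ hy => rw [inner_smul_right, hy, mul_zero]

lemma quad_le (M : Matrix (Fin n) (Fin n) ℝ) (hM : M.IsHermitian)
    (u : OrthonormalBasis (Fin n) ℝ (EuclideanSpace ℝ (Fin n))) (d : Fin n → ℝ)
    (hu : ∀ i, mulVecE M (u i) = d i • (u i)) (s : Finset (Fin n)) (r : ℝ)
    (hr : ∀ i ∈ s, d i ≤ r) (x : EuclideanSpace ℝ (Fin n))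
    (hx : x ∈ Submodule.span ℝ (u '' ↑s)) :
    ⟪x, mulVecE M x⟫ ≤ r * ⟪x, x⟫ := by
  rw [quad_expand M hM u d hu x, norm_sq_expand u x, Finset.mul_sum]
  refine Finset.sum_le_sum fun i _ => ?_
  by_cases hi : i ∈ s
  · exact mul_le_mul_of_nonneg_right (hr i hi) (sq_nonneg _)
  · rw [inner_eq_zero_of_span u s x hx i hi]
    simp

lemma quad_ge (M : Matrix (Fin n) (Fin n) ℝ) (hM : M.IsHermitian)
    (u : OrthonormalBasis (Fin n) ℝ (EuclideanSpace ℝ (Fin n))) (d : Fin n → ℝ)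
    (hu : ∀ i, mulVecE M (u i) = d i • (u i)) (s : Finset (Fin n)) (r : ℝ)
    (hr : ∀ i ∈ s, r ≤ d i) (x : EuclideanSpace ℝ (Fin n))
    (hx : x ∈ Submodule.span ℝ (u '' ↑s)) :
    r * ⟪x, x⟫ ≤ ⟪x, mulVecE M x⟫ := by
  rw [quad_expand M hM u d hu x, norm_sq_expand u x, Finset.mul_sum]
  refine Finset.sum_le_sum fun i _ => ?_
  by_cases hi : i ∈ s
  · exact mul_le_mul_of_nonneg_right (hr i hi) (sq_nonneg _)
  · rw [inner_eq_zero_of_span u s x hx i hi]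
    simp

lemma finrank_span_ortho (u : OrthonormalBasis (Fin n) ℝ (EuclideanSpace ℝ (Fin n)))
    (s : Finset (Fin n)) :
    Module.finrank ℝ ↥(Submodule.span ℝ (u '' ↑s)) = s.card := by
  rw [Set.image_eq_range]
  have h := finrank_span_eq_card
    ((u.orthonormal.comp (Subtype.val : (↑s : Set (Fin n)) → Fin n)
      Subtype.val_injective).linearIndependent)
  simpa [Function.comp_def] using h

lemma inf_dim (U V : Submodule ℝ (EuclideanSpace ℝ (Fin n))) :
    Module.finrank ℝ U + Module.finrank ℝ V ≤ Module.finrank ℝ ↥(U ⊓ V) + n := by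
  have h1 := Submodule.finrank_sup_add_finrank_inf_eq U V
  have h2 : Module.finrank ℝ ↥(U ⊔ V) ≤ n := by
    have := Submodule.finrank_le (U ⊔ V)
    rwa [finrank_euclideanSpace, Fintype.card_fin] at this
  omega

lemma exists_eigenbasis (A : Matrix (Fin n) (Fin n) ℝ) (hA : A.IsHermitian) (a : Fin n → ℝ)
    (hae : ∃ σ : Equiv.Perm (Fin n), hA.eigenvalues = a ∘ σ) :
    ∃ u : OrthonormalBasis (Fin n) ℝ (EuclideanSpace ℝ (Fin n)),
      ∀ i, mulVecE A (u i) = a i • u i := by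
  obtain ⟨σ, hσ⟩ := hae
  refine ⟨hA.eigenvectorBasis.reindex σ, fun i => ?_⟩
  rw [OrthonormalBasis.reindex_apply]
  have h := hA.mulVec_eigenvectorBasis (σ.symm i)
  have hv : hA.eigenvalues (σ.symm i) = a i := by rw [hσ]; simp
  rw [hv] at h
  simp only [mulVecE]
  rw [show (WithLp.equiv 2 (Fin n → ℝ)) (hA.eigenvectorBasis (σ.symm i))
      = ⇑(hA.eigenvectorBasis (σ.symm i)) from rfl, h]
  rfl


end WeylHelpers


/-- Weyl inequalities: for real symmetric `A`, `B` with eigenvalues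
(descending) `a`, `b`, and `c` the descending eigenvalues of `A + B`, the
`(k+1)`-th largest eigenvalue `c_k` (0-indexed) satisfies
`a_i + b_j ≤ c_k` whenever `i + j = n + k` and `c_k ≤ a_i + b_j` whenever
`i + j = k` (all indices 0-indexed). -/
theorem weyl_inequalities (n : ℕ) (A B : Matrix (Fin n) (Fin n) ℝ)
    (hA : A.IsHermitian) (hB : B.IsHermitian) (hAB : (A + B).IsHermitian)
    (a b c : Fin n → ℝ)
    (haa : Antitone a) (hba : Antitone b) (hca : Antitone c)
    (hae : ∃ σ : Equiv.Perm (Fin n), hA.eigenvalues = a ∘ σ)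
    (hbe : ∃ σ : Equiv.Perm (Fin n), hB.eigenvalues = b ∘ σ)
    (hce : ∃ σ : Equiv.Perm (Fin n), hAB.eigenvalues = c ∘ σ)
    (k : Fin n) :
    (∀ i j : Fin n, (i : ℕ) + (j : ℕ) = n + (k : ℕ) → a i + b j ≤ c k) ∧
      (∀ i j : Fin n, (i : ℕ) + (j : ℕ) = (k : ℕ) → c k ≤ a i + b j) := by
  obtain ⟨uA, huA⟩ := exists_eigenbasis A hA a hae
  obtain ⟨uB, huB⟩ := exists_eigenbasis B hB b hbe
  obtain ⟨uC, huC⟩ := exists_eigenbasis (A + B) hAB c hce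
  constructor
  · -- lower bound: a i + b j ≤ c k when i + j = n + k
    intro i j hij
    set SA := Submodule.span ℝ (uA '' ↑(Finset.Iic i))
    set SB := Submodule.span ℝ (uB '' ↑(Finset.Iic j))
    set SC := Submodule.span ℝ (uC '' ↑(Finset.Ici k))
    have dA : Module.finrank ℝ SA = (i : ℕ) + 1 := by
      rw [finrank_span_ortho, Fin.card_Iic]
    have dB : Module.finrank ℝ SB = (j : ℕ) + 1 := by
      rw [finrank_span_ortho, Fin.card_Iic]
    have dC : Module.finrank ℝ SC = n - (k : ℕ) := by
      rw [finrank_span_ortho, Fin.card_Ici]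
    have h1 := inf_dim SA SB
    have h2 := inf_dim (SA ⊓ SB) SC
    have hk : (k : ℕ) < n := k.isLt
    have hpos : 0 < Module.finrank ℝ ↥(SA ⊓ SB ⊓ SC) := by omega
    obtain ⟨x, hx0⟩ := Module.finrank_pos_iff_exists_ne_zero.mp hpos
    set v : EuclideanSpace ℝ (Fin n) := (x : EuclideanSpace ℝ (Fin n))
    have hv0 : v ≠ 0 := fun h => hx0 (Subtype.ext h)
    obtain ⟨⟨hvA, hvB⟩, hvC⟩ := x.2
    have hQ : (0 : ℝ) < ⟪v, v⟫ := by rw [real_inner_self_eq_norm_sq]; exact pow_pos (norm_pos_iff.mpr hv0) 2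
    have hAq : a i * ⟪v, v⟫ ≤ ⟪v, mulVecE A v⟫ :=
      quad_ge A hA uA a huA _ (a i)
        (fun l hl => haa (Finset.mem_Iic.mp hl)) v hvA
    have hBq : b j * ⟪v, v⟫ ≤ ⟪v, mulVecE B v⟫ :=
      quad_ge B hB uB b huB _ (b j)
        (fun l hl => hba (Finset.mem_Iic.mp hl)) v hvB
    have hCq : ⟪v, mulVecE (A + B) v⟫ ≤ c k * ⟪v, v⟫ :=
      quad_le (A + B) hAB uC c huC _ (c k)
        (fun l hl => hca (Finset.mem_Ici.mp hl)) v hvC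
    rw [mulVecE_add, inner_add_right] at hCq
    have : (a i + b j) * ⟪v, v⟫ ≤ c k * ⟪v, v⟫ := by nlinarith
    exact le_of_mul_le_mul_right (by linarith [this]) hQ
  · -- upper bound: c k ≤ a i + b j when i + j = k
    intro i j hij
    set SA := Submodule.span ℝ (uA '' ↑(Finset.Ici i))
    set SB := Submodule.span ℝ (uB '' ↑(Finset.Ici j))
    set SC := Submodule.span ℝ (uC '' ↑(Finset.Iic k))
    have dA : Module.finrank ℝ SA = n - (i : ℕ) := by
      rw [finrank_span_ortho, Fin.card_Ici]
    have dB : Module.finrank ℝ SB = n - (j : ℕ) := by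
      rw [finrank_span_ortho, Fin.card_Ici]
    have dC : Module.finrank ℝ SC = (k : ℕ) + 1 := by
      rw [finrank_span_ortho, Fin.card_Iic]
    have h1 := inf_dim SA SB
    have h2 := inf_dim (SA ⊓ SB) SC
    have hk : (k : ℕ) < n := k.isLt
    have hi : (i : ℕ) < n := i.isLt
    have hj : (j : ℕ) < n := j.isLt
    have hpos : 0 < Module.finrank ℝ ↥(SA ⊓ SB ⊓ SC) := by omega
    obtain ⟨x, hx0⟩ := Module.finrank_pos_iff_exists_ne_zero.mp hpos
    set v : EuclideanSpace ℝ (Fin n) := (x : EuclideanSpace ℝ (Fin n))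
    have hv0 : v ≠ 0 := fun h => hx0 (Subtype.ext h)
    obtain ⟨⟨hvA, hvB⟩, hvC⟩ := x.2
    have hQ : (0 : ℝ) < ⟪v, v⟫ := by rw [real_inner_self_eq_norm_sq]; exact pow_pos (norm_pos_iff.mpr hv0) 2
    have hAq : ⟪v, mulVecE A v⟫ ≤ a i * ⟪v, v⟫ :=
      quad_le A hA uA a huA _ (a i)
        (fun l hl => haa (Finset.mem_Ici.mp hl)) v hvA
    have hBq : ⟪v, mulVecE B v⟫ ≤ b j * ⟪v, v⟫ :=
      quad_le B hB uB b huB _ (b j)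
        (fun l hl => hba (Finset.mem_Ici.mp hl)) v hvB
    have hCq : c k * ⟪v, v⟫ ≤ ⟪v, mulVecE (A + B) v⟫ :=
      quad_ge (A + B) hAB uC c huC _ (c k)
        (fun l hl => hca (Finset.mem_Iic.mp hl)) v hvC
    rw [mulVecE_add, inner_add_right] at hCq
    have : c k * ⟪v, v⟫ ≤ (a i + b j) * ⟪v, v⟫ := by nlinarith
    exact le_of_mul_le_mul_right (by linarith [this]) hQ
end

section
/- In the setting above, for any k ≥ n_U + r (with k + 1 ≤ n), the eigenvalue λ_{k+1} of (1-θ)A₀ + θĀ* satisfies (1-θ)ν_{k+1} ≤ λ_{k+1} ≤ min{θ + (1-θ)ν_{k+1}, θα + (1-θ)ν_{k-n_U}, (1-θ)ν_{k+1-r-n_U}}. -/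
open Matrix


open Matrix Submodule Module

namespace WeylAux

variable {n : ℕ}

lemma eig_apply (A : Matrix (Fin n) (Fin n) ℝ) (hA : A.IsHermitian) (j : Fin n) :
    Matrix.toEuclideanLin A (hA.eigenvectorBasis j) =
      hA.eigenvalues j • (hA.eigenvectorBasis j) := by
  have h := hA.mulVec_eigenvectorBasis j
  apply (WithLp.equiv 2 (Fin n → ℝ)).injective
  simpa [Matrix.toEuclideanLin_apply] using h

lemma quad_eq_sum (A : Matrix (Fin n) (Fin n) ℝ) (hA : A.IsHermitian)
    (x : EuclideanSpace ℝ (Fin n)) :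
    (inner ℝ x (Matrix.toEuclideanLin A x) : ℝ)
      = ∑ j, hA.eigenvalues j * (hA.eigenvectorBasis.repr x j)^2 := by
  set b := hA.eigenvectorBasis
  have hsym : (Matrix.toEuclideanLin A).IsSymmetric :=
    (Matrix.isHermitian_iff_isSymmetric).1 hA
  nth_rewrite 1 [← b.sum_repr x]
  rw [sum_inner]
  refine Finset.sum_congr rfl fun j _ => ?_
  rw [real_inner_smul_left]
  have h1 : (inner ℝ (b j) (Matrix.toEuclideanLin A x) : ℝ)
      = hA.eigenvalues j * inner ℝ (b j) x := by
    rw [← hsym (b j) x, eig_apply, real_inner_smul_left]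
  rw [h1, ← b.repr_apply_apply]
  ring

lemma norm_sq_eq_sum (b : OrthonormalBasis (Fin n) ℝ (EuclideanSpace ℝ (Fin n)))
    (x : EuclideanSpace ℝ (Fin n)) : ‖x‖^2 = ∑ j, (b.repr x j)^2 := by
  rw [← b.repr.norm_map x, EuclideanSpace.norm_eq, Real.sq_sqrt (by positivity)]
  simp [sq_abs]

lemma repr_eq_zero_of_mem_span (b : OrthonormalBasis (Fin n) ℝ (EuclideanSpace ℝ (Fin n)))
    (S : Set (Fin n)) (x : EuclideanSpace ℝ (Fin n))
    (hx : x ∈ span ℝ (⇑b '' S)) {j : Fin n} (hj : j ∉ S) : b.repr x j = 0 := by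
  have hb : ⇑b = ⇑b.toBasis := by simp
  rw [hb] at hx
  rw [Basis.mem_span_image] at hx
  by_contra h
  exact hj (hx (by simpa using h))

lemma quad_le (A : Matrix (Fin n) (Fin n) ℝ) (hA : A.IsHermitian) (S : Set (Fin n)) (c : ℝ)
    (hc : ∀ j ∈ S, hA.eigenvalues j ≤ c) (x : EuclideanSpace ℝ (Fin n))
    (hx : x ∈ span ℝ (⇑hA.eigenvectorBasis '' S)) :
    (inner ℝ x (Matrix.toEuclideanLin A x) : ℝ) ≤ c * ‖x‖^2 := by
  rw [quad_eq_sum A hA, norm_sq_eq_sum hA.eigenvectorBasis, Finset.mul_sum]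
  refine Finset.sum_le_sum fun j _ => ?_
  by_cases hj : j ∈ S
  · exact mul_le_mul_of_nonneg_right (hc j hj) (sq_nonneg _)
  · rw [repr_eq_zero_of_mem_span _ S x hx hj]; simp

lemma quad_ge (A : Matrix (Fin n) (Fin n) ℝ) (hA : A.IsHermitian) (S : Set (Fin n)) (c : ℝ)
    (hc : ∀ j ∈ S, c ≤ hA.eigenvalues j) (x : EuclideanSpace ℝ (Fin n))
    (hx : x ∈ span ℝ (⇑hA.eigenvectorBasis '' S)) :
    c * ‖x‖^2 ≤ (inner ℝ x (Matrix.toEuclideanLin A x) : ℝ) := by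
  rw [quad_eq_sum A hA, norm_sq_eq_sum hA.eigenvectorBasis, Finset.mul_sum]
  refine Finset.sum_le_sum fun j _ => ?_
  by_cases hj : j ∈ S
  · exact mul_le_mul_of_nonneg_right (hc j hj) (sq_nonneg _)
  · rw [repr_eq_zero_of_mem_span _ S x hx hj]; simp

lemma quad_nonneg (A : Matrix (Fin n) (Fin n) ℝ) (hA : A.IsHermitian)
    (h : ∀ j, 0 ≤ hA.eigenvalues j) (x : EuclideanSpace ℝ (Fin n)) :
    0 ≤ (inner ℝ x (Matrix.toEuclideanLin A x) : ℝ) := by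
  rw [quad_eq_sum A hA]
  exact Finset.sum_nonneg fun j _ => mul_nonneg (h j) (sq_nonneg _)

lemma finrank_span_basis_image (b : OrthonormalBasis (Fin n) ℝ (EuclideanSpace ℝ (Fin n)))
    (S : Finset (Fin n)) :
    finrank ℝ (span ℝ (⇑b '' ↑S)) = S.card := by
  rw [Set.image_eq_range]
  rw [show (Set.range fun x : ↑(↑S : Set (Fin n)) => b ↑x)
      = Set.range (⇑b ∘ (Subtype.val : ↑(↑S : Set (Fin n)) → Fin n)) from rfl]
  rw [finrank_span_eq_card (b.orthonormal.linearIndependent.comp _ Subtype.val_injective)]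
  simp

lemma exists_mem_inf3 (U V W : Submodule ℝ (EuclideanSpace ℝ (Fin n)))
    (h : 2 * n < finrank ℝ U + finrank ℝ V + finrank ℝ W) :
    ∃ x : EuclideanSpace ℝ (Fin n), x ≠ 0 ∧ x ∈ U ∧ x ∈ V ∧ x ∈ W := by
  have hE : finrank ℝ (EuclideanSpace ℝ (Fin n)) = n := finrank_euclideanSpace_fin
  have h1 : finrank ℝ U + finrank ℝ V ≤ finrank ℝ ↥(U ⊓ V) + n := by
    rw [← Submodule.finrank_sup_add_finrank_inf_eq U V]
    have := (U ⊔ V).finrank_le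
    omega
  have h2 : finrank ℝ ↥(U ⊓ V) + finrank ℝ W ≤ finrank ℝ ↥(U ⊓ V ⊓ W) + n := by
    rw [← Submodule.finrank_sup_add_finrank_inf_eq (U ⊓ V) W]
    have := ((U ⊓ V) ⊔ W).finrank_le
    omega
  have hpos : 0 < finrank ℝ ↥(U ⊓ V ⊓ W) := by omega
  have : Nontrivial ↥(U ⊓ V ⊓ W) := finrank_pos_iff.mp hpos
  obtain ⟨⟨x, hx⟩, hx0⟩ := exists_ne (0 : ↥(U ⊓ V ⊓ W))
  refine ⟨x, ?_, hx.1.1, hx.1.2, hx.2⟩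
  simpa [Submodule.mk_eq_zero] using hx0

lemma upper_subspace (A : Matrix (Fin n) (Fin n) ℝ) (hA : A.IsHermitian)
    (m : Fin n → ℝ) (hm : Antitone m) (σ : Equiv.Perm (Fin n))
    (hσ : hA.eigenvalues = m ∘ σ) (t : Fin n) :
    ∃ W : Submodule ℝ (EuclideanSpace ℝ (Fin n)),
      n ≤ finrank ℝ W + (t : ℕ) ∧
      ∀ x ∈ W, (inner ℝ x (Matrix.toEuclideanLin A x) : ℝ) ≤ m t * ‖x‖^2 := by
  classical
  set S : Finset (Fin n) := Finset.univ.filter (fun j => t ≤ σ j) with hS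
  refine ⟨span ℝ (⇑hA.eigenvectorBasis '' ↑S), ?_, ?_⟩
  · rw [finrank_span_basis_image]
    have hcard : S.card = (Finset.Ici t).card := by
      refine Finset.card_bij' (fun j _ => σ j) (fun j _ => σ.symm j) ?_ ?_ ?_ ?_ <;>
        simp [hS, Finset.mem_Ici]
    rw [hcard, Fin.card_Ici]
    have := t.isLt
    omega
  · intro x hx
    refine quad_le A hA ↑S (m t) ?_ x hx
    intro j hj
    rw [hσ]
    exact hm (by simpa [hS] using hj)

lemma lower_subspace (A : Matrix (Fin n) (Fin n) ℝ) (hA : A.IsHermitian)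
    (m : Fin n → ℝ) (hm : Antitone m) (σ : Equiv.Perm (Fin n))
    (hσ : hA.eigenvalues = m ∘ σ) (t : Fin n) :
    ∃ W : Submodule ℝ (EuclideanSpace ℝ (Fin n)),
      (t : ℕ) + 1 ≤ finrank ℝ W ∧
      ∀ x ∈ W, m t * ‖x‖^2 ≤ (inner ℝ x (Matrix.toEuclideanLin A x) : ℝ) := by
  classical
  set S : Finset (Fin n) := Finset.univ.filter (fun j => σ j ≤ t) with hS
  refine ⟨span ℝ (⇑hA.eigenvectorBasis '' ↑S), ?_, ?_⟩
  · rw [finrank_span_basis_image]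
    have hcard : S.card = (Finset.Iic t).card := by
      refine Finset.card_bij' (fun j _ => σ j) (fun j _ => σ.symm j) ?_ ?_ ?_ ?_ <;>
        simp [hS, Finset.mem_Iic]
    rw [hcard, Fin.card_Iic]
  · intro x hx
    refine quad_ge A hA ↑S (m t) ?_ x hx
    intro j hj
    rw [hσ]
    exact hm (by simpa [hS] using hj)

end WeylAux

open Matrix Submodule Module WeylAux

/-- eigenvalue bounds for the mixture `(1-θ)A₀ + θĀ*` when
`k ≥ n_U + r` (and `k+1 ≤ n`). Paper indices are 1-indexed; here 0-indexed:
`λ_{k+1} = lam k`, `ν_{k+1} = ν k`, `ν_{k-n_U} = ν (k-n_U-1)`,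
`ν_{k+1-r-n_U} = ν (k-r-n_U)`. -/
theorem mixture_eigenvalue_bounds_large_k (r nL nU n : ℕ) (hr : 2 ≤ r) (hrnL : r ≤ nL)
    (hn : n = nL + nU)
    (θ α : ℝ) (hθ0 : 0 ≤ θ) (hθ1 : θ ≤ 1) (hα0 : 0 < α) (hα1 : α ≤ 1)
    (A0 : Matrix (Fin n) (Fin n) ℝ) (hA0 : A0.IsHermitian)
    (ν : Fin n → ℝ) (hνa : Antitone ν)
    (hνe : ∃ σ : Equiv.Perm (Fin n), hA0.eigenvalues = ν ∘ σ)
    (Astar : Matrix (Fin n) (Fin n) ℝ) (hAs : Astar.IsHermitian)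
    (hspec : ∃ σ : Equiv.Perm (Fin n), hAs.eigenvalues =
      (fun i : Fin n => if (i : ℕ) < nU + 1 then (1 : ℝ)
        else if (i : ℕ) < nU + r then α else 0) ∘ σ)
    (hmix : ((1 - θ) • A0 + θ • Astar).IsHermitian)
    (lam : Fin n → ℝ) (hlama : Antitone lam)
    (hlame : ∃ σ : Equiv.Perm (Fin n), hmix.eigenvalues = lam ∘ σ)
    (k : ℕ) (hk : nU + r ≤ k) (hkn : k + 1 ≤ n) :
    (1 - θ) * ν ⟨k, by omega⟩ ≤ lam ⟨k, by omega⟩ ∧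
    lam ⟨k, by omega⟩ ≤ θ + (1 - θ) * ν ⟨k, by omega⟩ ∧
    lam ⟨k, by omega⟩ ≤ θ * α + (1 - θ) * ν ⟨k - nU - 1, by omega⟩ ∧
    lam ⟨k, by omega⟩ ≤ (1 - θ) * ν ⟨k - r - nU, by omega⟩ := by
  obtain ⟨σ0, hσ0⟩ := hνe
  obtain ⟨σs, hσs⟩ := hspec
  obtain ⟨σm, hσm⟩ := hlame
  set pat : Fin n → ℝ := fun i : Fin n => if (i : ℕ) < nU + 1 then (1 : ℝ)
        else if (i : ℕ) < nU + r then α else 0 with hpatdef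
  have hpat : Antitone pat := by
    intro i j hij
    simp only [hpatdef]
    have hij' : (i : ℕ) ≤ (j : ℕ) := hij
    split_ifs <;> first | rfl | linarith
  have hθ' : (0:ℝ) ≤ 1 - θ := by linarith
  -- decomposition of the quadratic form of the mixture
  have hQ : ∀ x : EuclideanSpace ℝ (Fin n),
      (inner ℝ x (Matrix.toEuclideanLin ((1 - θ) • A0 + θ • Astar) x) : ℝ)
        = (1 - θ) * inner ℝ x (Matrix.toEuclideanLin A0 x)
          + θ * inner ℝ x (Matrix.toEuclideanLin Astar x) := by
    intro x
    rw [map_add, _root_.map_smul, _root_.map_smul]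
    simp [inner_add_right, real_inner_smul_right, Finset.mul_sum, mul_left_comm]
  -- nonnegativity of the Astar quadratic form
  have hAsnn : ∀ x : EuclideanSpace ℝ (Fin n),
      0 ≤ (inner ℝ x (Matrix.toEuclideanLin Astar x) : ℝ) := by
    refine quad_nonneg Astar hAs fun j => ?_
    rw [hσs]
    simp only [Function.comp_apply, hpatdef]
    split_ifs <;> positivity
  have hkn' : k < n := by omega
  -- generic upper bound
  have upper : ∀ (i j : ℕ) (hi : i < n) (hj : j < n), i + j = k →
      lam ⟨k, hkn'⟩ ≤ (1 - θ) * ν ⟨i, hi⟩ + θ * pat ⟨j, hj⟩ := by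
    intro i j hi hj hij
    obtain ⟨W1, hW1d, hW1⟩ := lower_subspace _ hmix lam hlama σm hσm ⟨k, hkn'⟩
    obtain ⟨W2, hW2d, hW2⟩ := upper_subspace _ hA0 ν hνa σ0 hσ0 ⟨i, hi⟩
    obtain ⟨W3, hW3d, hW3⟩ := upper_subspace _ hAs pat hpat σs hσs ⟨j, hj⟩
    obtain ⟨x, hx0, hx1, hx2, hx3⟩ := exists_mem_inf3 W1 W2 W3 (by
      simp only at hW1d hW2d hW3d ⊢
      omega)
    have hns : (0:ℝ) < ‖x‖^2 := by
      have : ‖x‖ ≠ 0 := fun h => hx0 (norm_eq_zero.mp h)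
      positivity
    have h1 := hW1 x hx1
    have h2 := hW2 x hx2
    have h3 := hW3 x hx3
    have hQx := hQ x
    have hmain : lam ⟨k, hkn'⟩ * ‖x‖^2
        ≤ ((1 - θ) * ν ⟨i, hi⟩ + θ * pat ⟨j, hj⟩) * ‖x‖^2 := by
      calc lam ⟨k, hkn'⟩ * ‖x‖^2
          ≤ (inner ℝ x (Matrix.toEuclideanLin ((1 - θ) • A0 + θ • Astar) x) : ℝ) := h1
        _ = (1 - θ) * inner ℝ x (Matrix.toEuclideanLin A0 x)
              + θ * inner ℝ x (Matrix.toEuclideanLin Astar x) := hQx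
        _ ≤ (1 - θ) * (ν ⟨i, hi⟩ * ‖x‖^2) + θ * (pat ⟨j, hj⟩ * ‖x‖^2) :=
            add_le_add (mul_le_mul_of_nonneg_left h2 hθ')
              (mul_le_mul_of_nonneg_left h3 hθ0)
        _ = ((1 - θ) * ν ⟨i, hi⟩ + θ * pat ⟨j, hj⟩) * ‖x‖^2 := by ring
    exact le_of_mul_le_mul_right (by simpa [mul_comm] using hmain) hns
  -- lower bound
  have lower : (1 - θ) * ν ⟨k, hkn'⟩ ≤ lam ⟨k, hkn'⟩ := by
    obtain ⟨W1, hW1d, hW1⟩ := lower_subspace _ hA0 ν hνa σ0 hσ0 ⟨k, hkn'⟩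
    obtain ⟨W2, hW2d, hW2⟩ := upper_subspace _ hmix lam hlama σm hσm ⟨k, hkn'⟩
    obtain ⟨x, hx0, hx1, hx2, _⟩ := exists_mem_inf3 W1 W2 ⊤ (by
      simp only [finrank_top, finrank_euclideanSpace_fin] at *
      omega)
    have hns : (0:ℝ) < ‖x‖^2 := by
      have : ‖x‖ ≠ 0 := fun h => hx0 (norm_eq_zero.mp h)
      positivity
    have h1 := hW1 x hx1
    have h2 := hW2 x hx2
    have hQx := hQ x
    have hAsx := hAsnn x
    have hmain : ((1 - θ) * ν ⟨k, hkn'⟩) * ‖x‖^2 ≤ lam ⟨k, hkn'⟩ * ‖x‖^2 := by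
      calc ((1 - θ) * ν ⟨k, hkn'⟩) * ‖x‖^2
          = (1 - θ) * (ν ⟨k, hkn'⟩ * ‖x‖^2) := by ring
        _ ≤ (1 - θ) * inner ℝ x (Matrix.toEuclideanLin A0 x) :=
            mul_le_mul_of_nonneg_left h1 hθ'
        _ ≤ (1 - θ) * inner ℝ x (Matrix.toEuclideanLin A0 x)
              + θ * inner ℝ x (Matrix.toEuclideanLin Astar x) := by
            have := mul_nonneg hθ0 hAsx
            linarith
        _ = (inner ℝ x (Matrix.toEuclideanLin ((1 - θ) • A0 + θ • Astar) x) : ℝ) := hQx.symm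
        _ ≤ lam ⟨k, hkn'⟩ * ‖x‖^2 := h2
    exact le_of_mul_le_mul_right (by simpa [mul_comm] using hmain) hns
  refine ⟨lower, ?_, ?_, ?_⟩
  · have h := upper k 0 hkn' (by omega) (by omega)
    have hp : pat ⟨0, by omega⟩ = 1 := by simp [hpatdef]
    rw [hp] at h
    linarith
  · have h := upper (k - nU - 1) (nU + 1) (by omega) (by omega) (by omega)
    have hp : pat ⟨nU + 1, by omega⟩ = α := by
      simp only [hpatdef]
      rw [if_neg (by omega), if_pos (by omega)]
    rw [hp] at h
    linarith
  · have h := upper (k - r - nU) (nU + r) (by omega) (by omega) (by omega)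
    have hp : pat ⟨nU + r, by omega⟩ = 0 := by
      simp only [hpatdef]
      rw [if_neg (by omega), if_neg (by omega)]
    rw [hp] at h
    linarith
end
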